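/- Let L, M ∈ 𝐋^reg and P ∈ 𝐎*(L,M). Then for every u ∈ [0,1] the matrix L(u) := (1−u)L + uMP belongs to 𝐋^reg, i.e., (L(u)ᵀL(u))_{t,t} is positive definite for every t = 1,…,T. (Hence 𝐋^reg/𝐎 is a geodesically convex subset of 𝐋/𝐎 with respect to d_ABW.) -/

import Mathlib

open Matrix Filter Topology

/-- Square matrices of size `dT × dT`, indexed by blocks: index `(t, i)` is
row/column `i` within block `t`. -/
abbrev Mat (d T : ℕ) := Matrix (Fin T × Fin d) (Fin T × Fin d) ℝ

/-- The `t`-th diagonal `d × d` block of a `dT × dT` matrix. -/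
def blk {d T : ℕ} (A : Mat d T) (t : Fin T) : Matrix (Fin d) (Fin d) ℝ :=
  fun i j => A (t, i) (t, j)

/-- The `t`-th block column of a `dT × dT` matrix, a `dT × d` matrix. -/
def colBlk {d T : ℕ} (A : Mat d T) (t : Fin T) : Matrix (Fin T × Fin d) (Fin d) ℝ :=
  fun p j => A p (t, j)

/-- Membership in `𝐋`: block lower triangular matrices. -/
def memL {d T : ℕ} (A : Mat d T) : Prop :=
  ∀ (t s : Fin T) (i j : Fin d), t < s → A (t, i) (s, j) = 0

/-- Membership in `𝐎`: block diagonal matrices with orthogonal `d × d` diagonal blocks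
(equivalently: block diagonal and orthogonal). -/
def memO {d T : ℕ} (O : Mat d T) : Prop :=
  (∀ (t s : Fin T) (i j : Fin d), t ≠ s → O (t, i) (s, j) = 0) ∧ Oᵀ * O = 1

/-- The Frobenius norm of a real matrix. -/
noncomputable def frobNorm {m n : Type*} [Fintype m] [Fintype n] (A : Matrix m n ℝ) : ℝ :=
  Real.sqrt (∑ i, ∑ j, (A i j) ^ 2)

/-- The Frobenius inner product of two real matrices. -/
noncomputable def frobInner {m n : Type*} [Fintype m] [Fintype n] (A B : Matrix m n ℝ) : ℝ :=
  ∑ i, ∑ j, A i j * B i j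

/-- The adapted Bures–Wasserstein distance `d_ABW(L, M) = inf_{O ∈ 𝐎} ‖L - M O‖_F`. -/
noncomputable def dABW {d T : ℕ} (L M : Mat d T) : ℝ :=
  sInf {r : ℝ | ∃ O : Mat d T, memO O ∧ r = frobNorm (L - M * O)}

/-- The set `𝐎*(L, M)` of optimizers of `inf_{O ∈ 𝐎} ‖L - M O‖_F`. -/
noncomputable def OStar {d T : ℕ} (L M : Mat d T) : Set (Mat d T) :=
  {O | memO O ∧ frobNorm (L - M * O) = dABW L M}

/-- The set `𝐕(L) = {M P - L : M ∈ 𝐋, P ∈ 𝐎*(L, M)}`. -/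
noncomputable def VSet {d T : ℕ} (L : Mat d T) : Set (Mat d T) :=
  {V | ∃ M P : Mat d T, memL M ∧ P ∈ OStar L M ∧ V = M * P - L}

/-- The set `𝒱(L) = {V ∈ 𝐋 : (Vᵀ L)_{t,t} is symmetric for all t}`. -/
def calV {d T : ℕ} (L : Mat d T) : Set (Mat d T) :=
  {V | memL V ∧ ∀ t : Fin T, (blk (Vᵀ * L) t).IsSymm}

/-- The set `𝐋^reg = {L ∈ 𝐋 : (Lᵀ L)_{t,t} is positive definite for all t}`. -/
def LReg {d T : ℕ} : Set (Mat d T) :=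
  {L | memL L ∧ ∀ t : Fin T, (blk (Lᵀ * L) t).PosDef}

/-- The sum of the singular values of a real square matrix `A`,
i.e. the trace of the positive semidefinite square root of `Aᵀ A`. -/
noncomputable def svSum {n : ℕ} (A : Matrix (Fin n) (Fin n) ℝ) : ℝ :=
  ((Matrix.posSemidef_conjTranspose_mul_self A).1.eigenvectorUnitary.1 *
    Matrix.diagonal ((RCLike.ofReal : ℝ → ℝ) ∘ (Real.sqrt ·) ∘ (Matrix.posSemidef_conjTranspose_mul_self A).1.eigenvalues) *
    (star (Matrix.posSemidef_conjTranspose_mul_self A).1.eigenvectorUnitary : Matrix (Fin n) (Fin n) ℝ)).trace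

/-- The operator norm of a real matrix: the supremum of the euclidean norm `‖A x‖₂`
over the euclidean unit ball. -/
noncomputable def opNorm {m n : Type*} [Fintype m] [Fintype n] (A : Matrix m n ℝ) : ℝ :=
  sSup {r : ℝ | ∃ x : n → ℝ, (∑ j, (x j) ^ 2) ≤ 1 ∧ r = Real.sqrt (∑ i, (A.mulVec x i) ^ 2)}


section Aux
variable {d T : ℕ}

lemma blk_transpose_mul (A B : Mat d T) (t : Fin T) :
    blk (Aᵀ * B) t = (colBlk A t)ᵀ * colBlk B t := by
  ext i j
  simp [blk, colBlk, Matrix.mul_apply]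

lemma quadBil' {m n : Type*} [Fintype m] [Fintype n] (B C : Matrix m n ℝ) (x : n → ℝ) :
    x ⬝ᵥ (Bᵀ * C) *ᵥ x = (B *ᵥ x) ⬝ᵥ (C *ᵥ x) := by
  rw [← Matrix.mulVec_mulVec, Matrix.dotProduct_mulVec, Matrix.vecMul_transpose]

lemma quadBil (A B : Mat d T) (t : Fin T) (x : Fin d → ℝ) :
    x ⬝ᵥ (blk (Aᵀ * B) t) *ᵥ x = (colBlk A t *ᵥ x) ⬝ᵥ (colBlk B t *ᵥ x) := by
  rw [blk_transpose_mul, quadBil']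

lemma colBlk_mul_blockDiag (A P : Mat d T)
    (hP : ∀ (t s : Fin T) (i j : Fin d), t ≠ s → P (t, i) (s, j) = 0) (t : Fin T) :
    colBlk (A * P) t = colBlk A t * blk P t := by
  ext p j
  simp only [colBlk, blk, Matrix.mul_apply, Fintype.sum_prod_type]
  rw [Finset.sum_eq_single t]
  · intro s _ hst
    exact Finset.sum_eq_zero fun k _ => by rw [hP s t k j hst, mul_zero]
  · simp

lemma colGram_eq_blkGram (P : Mat d T)
    (hP : ∀ (t s : Fin T) (i j : Fin d), t ≠ s → P (t, i) (s, j) = 0) (t : Fin T) :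
    (colBlk P t)ᵀ * colBlk P t = (blk P t)ᵀ * blk P t := by
  ext i j
  simp only [Matrix.mul_apply, Matrix.transpose_apply, colBlk, blk, Fintype.sum_prod_type]
  rw [Finset.sum_eq_single t]
  · intro s _ hst
    exact Finset.sum_eq_zero fun k _ => by rw [hP s t k i hst, zero_mul]
  · simp

lemma blk_one (t : Fin T) : blk (1 : Mat d T) t = (1 : Matrix (Fin d) (Fin d) ℝ) := by
  ext i j
  simp [blk, Matrix.one_apply, Prod.ext_iff]

noncomputable def sumSq {m n : Type*} [Fintype m] [Fintype n] (A : Matrix m n ℝ) : ℝ :=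
  ∑ i, ∑ j, (A i j) ^ 2

lemma sumSq_nonneg {m n : Type*} [Fintype m] [Fintype n] (A : Matrix m n ℝ) : 0 ≤ sumSq A :=
  Finset.sum_nonneg fun i _ => Finset.sum_nonneg fun j _ => sq_nonneg _

lemma frobNorm_eq {m n : Type*} [Fintype m] [Fintype n] (A : Matrix m n ℝ) :
    frobNorm A = Real.sqrt (sumSq A) := rfl

lemma sumSq_eq_trace {m n : Type*} [Fintype m] [Fintype n] [DecidableEq n]
    (A : Matrix m n ℝ) : sumSq A = Matrix.trace (Aᵀ * A) := by
  simp only [sumSq, Matrix.trace, Matrix.diag, Matrix.mul_apply, Matrix.transpose_apply, sq]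
  exact Finset.sum_comm

lemma sumSq_sub (L B : Mat d T) :
    sumSq (L - B) = sumSq L - 2 * Matrix.trace (Lᵀ * B) + sumSq B := by
  have h : Matrix.trace (Lᵀ * B) = ∑ i, ∑ j, L i j * B i j := by
    simp only [Matrix.trace, Matrix.diag, Matrix.mul_apply, Matrix.transpose_apply]
    exact Finset.sum_comm
  simp only [sumSq, h, Matrix.sub_apply, Finset.mul_sum, ← Finset.sum_sub_distrib,
    ← Finset.sum_add_distrib]
  refine Finset.sum_congr rfl fun i _ => Finset.sum_congr rfl fun j _ => by ring

lemma sumSq_mul_memO (M O : Mat d T) (hO : memO O) : sumSq (M * O) = sumSq M := by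
  rw [sumSq_eq_trace, sumSq_eq_trace M, Matrix.transpose_mul, Matrix.mul_assoc,
    ← Matrix.mul_assoc Mᵀ M O, ← Matrix.mul_assoc, Matrix.trace_mul_comm,
    ← Matrix.mul_assoc, mul_eq_one_comm.mp hO.2, Matrix.one_mul]

lemma opt_trace (L M P : Mat d T) (hP : P ∈ OStar L M) (O : Mat d T) (hO : memO O) :
    Matrix.trace (Lᵀ * (M * O)) ≤ Matrix.trace (Lᵀ * (M * P)) := by
  have hbdd : BddBelow {r : ℝ | ∃ O : Mat d T, memO O ∧ r = frobNorm (L - M * O)} := by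
    refine ⟨0, fun r hr => ?_⟩
    obtain ⟨O', _, rfl⟩ := hr
    exact Real.sqrt_nonneg _
  have h1 : frobNorm (L - M * P) ≤ frobNorm (L - M * O) := by
    rw [hP.2]
    exact csInf_le hbdd ⟨O, hO, rfl⟩
  rw [frobNorm_eq, frobNorm_eq, Real.sqrt_le_sqrt_iff (sumSq_nonneg _)] at h1
  rw [sumSq_sub, sumSq_sub, sumSq_mul_memO M O hO, sumSq_mul_memO M P hP.1] at h1
  linarith

lemma memO_mul (A B : Mat d T) (hA : memO A) (hB : memO B) : memO (A * B) := by
  constructor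
  · intro t s i j hts
    rw [Matrix.mul_apply]
    refine Finset.sum_eq_zero fun q _ => ?_
    by_cases hq : q.1 = t
    · rw [hB.1 q.1 s q.2 j (hq ▸ hts), mul_zero]
    · rw [hA.1 t q.1 i q.2 (fun h => hq h.symm), zero_mul]
  · rw [Matrix.transpose_mul, Matrix.mul_assoc, ← Matrix.mul_assoc Aᵀ A B, hA.2,
      Matrix.one_mul, hB.2]

lemma vecMulVec_mul_vecMulVec {n : Type*} [Fintype n] (w : n → ℝ) :
    Matrix.vecMulVec w w * Matrix.vecMulVec w w = (w ⬝ᵥ w) • Matrix.vecMulVec w w := by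
  ext i j
  simp only [Matrix.mul_apply, Matrix.vecMulVec_apply, Matrix.smul_apply, dotProduct,
    smul_eq_mul, Finset.sum_mul]
  exact Finset.sum_congr rfl fun k _ => by ring

lemma householder_memO (t : Fin T) (v : Fin d → ℝ) (hv : v ⬝ᵥ v = 1) :
    memO (1 - (2:ℝ) • Matrix.vecMulVec (fun p : Fin T × Fin d => if p.1 = t then v p.2 else 0)
      (fun p : Fin T × Fin d => if p.1 = t then v p.2 else 0)) := by
  set w : Fin T × Fin d → ℝ := fun p => if p.1 = t then v p.2 else 0 with hw
  have hww : w ⬝ᵥ w = 1 := by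
    rw [← hv]
    simp only [dotProduct, hw, Fintype.sum_prod_type]
    rw [Finset.sum_eq_single t]
    · simp
    · intro s _ hst; simp [hst]
    · simp
  have hsymm : (Matrix.vecMulVec w w)ᵀ = Matrix.vecMulVec w w := by
    ext i j; simp [Matrix.vecMulVec_apply, mul_comm]
  constructor
  · intro r s i j hrs
    simp only [Matrix.sub_apply, Matrix.smul_apply, Matrix.one_apply,
      Matrix.vecMulVec_apply, hw, smul_eq_mul]
    have h1 : ((r,i) = ((s,j) : Fin T × Fin d)) = False := by
      simp [Prod.ext_iff]; intro h; exact absurd h hrs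
    by_cases hr : r = t
    · have hs : ¬ s = t := fun h => hrs (hr.trans h.symm)
      simp [h1, hs]
    · simp [h1, hr]
  · have hE : (1 - (2:ℝ) • Matrix.vecMulVec w w)ᵀ = 1 - (2:ℝ) • Matrix.vecMulVec w w := by
      rw [Matrix.transpose_sub, Matrix.transpose_one, Matrix.transpose_smul, hsymm]
    rw [hE]
    simp only [sub_mul, mul_sub, Matrix.one_mul, Matrix.mul_one, Matrix.smul_mul,
      Matrix.mul_smul, _root_.vecMulVec_mul_vecMulVec, hww, one_smul, smul_smul]
    module

lemma trace_mul_vecMulVec (S : Mat d T) (w : Fin T × Fin d → ℝ) :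
    Matrix.trace (S * Matrix.vecMulVec w w) = w ⬝ᵥ S *ᵥ w := by
  simp only [Matrix.trace, Matrix.diag, Matrix.mul_apply, Matrix.vecMulVec_apply,
    dotProduct, Matrix.mulVec, Finset.mul_sum]
  exact Finset.sum_congr rfl fun p _ => Finset.sum_congr rfl fun q _ => by ring

lemma w_quad (S : Mat d T) (t : Fin T) (v : Fin d → ℝ) :
    (fun p : Fin T × Fin d => if p.1 = t then v p.2 else 0) ⬝ᵥ
      S *ᵥ (fun p : Fin T × Fin d => if p.1 = t then v p.2 else 0) =
    v ⬝ᵥ (blk S t) *ᵥ v := by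
  simp only [dotProduct, Matrix.mulVec, blk, Fintype.sum_prod_type, ite_mul, mul_ite,
    zero_mul, mul_zero, Finset.sum_ite_eq', Finset.mem_univ, if_true, Finset.sum_ite_irrel,
    Finset.sum_const_zero]

lemma dotProduct_self_pos' {n : Type*} [Fintype n] {x : n → ℝ} (hx : x ≠ 0) :
    0 < x ⬝ᵥ x := by
  obtain ⟨i, hi⟩ := Function.ne_iff.mp hx
  refine Finset.sum_pos' (fun j _ => mul_self_nonneg _) ⟨i, Finset.mem_univ i, ?_⟩
  exact mul_self_pos.mpr hi

lemma blk_psd (L M P : Mat d T) (hP : P ∈ OStar L M) (t : Fin T) (x : Fin d → ℝ) :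
    0 ≤ x ⬝ᵥ blk (Lᵀ * (M * P)) t *ᵥ x := by
  have main : ∀ v : Fin d → ℝ, v ⬝ᵥ v = 1 → 0 ≤ v ⬝ᵥ blk (Lᵀ * (M * P)) t *ᵥ v := by
    intro v hv
    set w : Fin T × Fin d → ℝ := fun p => if p.1 = t then v p.2 else 0 with hwdef
    set E : Mat d T := 1 - (2:ℝ) • Matrix.vecMulVec w w with hEdef
    have hE : memO E := householder_memO t v hv
    have hPE : memO (P * E) := memO_mul P E hP.1 hE
    have htr := opt_trace L M P hP (P * E) hPE
    have hassoc : Lᵀ * (M * (P * E)) = (Lᵀ * (M * P)) * E := by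
      rw [Matrix.mul_assoc, ← Matrix.mul_assoc M P E]
    rw [hassoc] at htr
    have hexp : Matrix.trace ((Lᵀ * (M * P)) * E) =
        Matrix.trace (Lᵀ * (M * P)) - 2 * (w ⬝ᵥ (Lᵀ * (M * P)) *ᵥ w) := by
      rw [hEdef, Matrix.mul_sub, Matrix.mul_one, Matrix.mul_smul, Matrix.trace_sub,
        Matrix.trace_smul, trace_mul_vecMulVec, smul_eq_mul]
    rw [hexp] at htr
    have h0 : 0 ≤ w ⬝ᵥ (Lᵀ * (M * P)) *ᵥ w := by linarith
    rwa [hwdef, w_quad] at h0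
  by_cases hx : x = 0
  · simp [hx]
  · have hxx : 0 < x ⬝ᵥ x := dotProduct_self_pos' hx
    set s := Real.sqrt (x ⬝ᵥ x) with hs
    have hspos : 0 < s := Real.sqrt_pos.mpr hxx
    set v : Fin d → ℝ := s⁻¹ • x with hvdef
    have hv1 : v ⬝ᵥ v = 1 := by
      rw [hvdef, smul_dotProduct, dotProduct_smul, smul_eq_mul, smul_eq_mul,
        ← mul_assoc, ← sq, ← Real.sqrt_inv, Real.sq_sqrt (by positivity)]
      field_simp
    have h0 := main v hv1
    rw [hvdef, smul_dotProduct, Matrix.mulVec_smul, dotProduct_smul, smul_eq_mul,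
      smul_eq_mul] at h0
    nlinarith [h0, mul_pos (inv_pos.mpr hspos) (inv_pos.mpr hspos)]

end Aux

/-- for `L, M ∈ 𝐋^reg` and `P ∈ 𝐎*(L,M)`, every point
`(1-u)L + uMP` of the geodesic is again in `𝐋^reg`. -/
theorem stmt18 (d T : ℕ) (hd : 0 < d) (hT : 0 < T) (L M P : Mat d T)
    (hL : L ∈ LReg) (hM : M ∈ LReg) (hP : P ∈ OStar L M) :
    ∀ u : ℝ, u ∈ Set.Icc (0 : ℝ) 1 →
      ∀ t : Fin T,
        (blk (((1 - u) • L + u • (M * P))ᵀ * ((1 - u) • L + u • (M * P))) t).PosDef := by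
  rintro u ⟨hu0, hu1⟩ t
  set N : Mat d T := M * P with hN
  set Lu : Mat d T := (1 - u) • L + u • N with hLu
  have hlin : colBlk Lu t = (1 - u) • colBlk L t + u • colBlk N t := by
    ext p j
    simp [hLu, colBlk]
  refine Matrix.posDef_iff_dotProduct_mulVec.mpr ⟨?_, ?_⟩
  · -- Hermitian
    rw [Matrix.IsHermitian]
    ext i j
    simp only [Matrix.conjTranspose_apply, blk, Matrix.mul_apply, Matrix.transpose_apply,
      star_trivial]
    exact Finset.sum_congr rfl fun p _ => mul_comm _ _
  · intro x hx
    have hstar : star x = x := rfl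
    rw [hstar, quadBil, hlin]
    have hmv : ((1 - u) • colBlk L t + u • colBlk N t) *ᵥ x =
        (1 - u) • (colBlk L t *ᵥ x) + u • (colBlk N t *ᵥ x) := by
      rw [Matrix.add_mulVec, Matrix.smul_mulVec, Matrix.smul_mulVec]
    rw [hmv]
    set a : Fin T × Fin d → ℝ := colBlk L t *ᵥ x with ha
    set b : Fin T × Fin d → ℝ := colBlk N t *ᵥ x with hb
    -- a ⬝ a > 0
    have hLq : 0 < a ⬝ᵥ a := by
      have h := (hL.2 t).dotProduct_mulVec_pos hx
      rw [show star x = x from rfl, quadBil] at h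
      exact h
    -- b ⬝ b > 0
    have hbb : 0 < b ⬝ᵥ b := by
      have hcol : colBlk N t = colBlk M t * blk P t := colBlk_mul_blockDiag M P hP.1.1 t
      set y : Fin d → ℝ := blk P t *ᵥ x with hy
      have hbmv : b = colBlk M t *ᵥ y := by
        rw [hb, hcol, ← Matrix.mulVec_mulVec]
      have hyy : y ⬝ᵥ y = x ⬝ᵥ x := by
        have h1 : y ⬝ᵥ y = x ⬝ᵥ ((blk P t)ᵀ * blk P t) *ᵥ x := (quadBil' _ _ x).symm
        rw [h1, ← colGram_eq_blkGram P hP.1.1 t, ← blk_transpose_mul, hP.1.2, blk_one,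
          Matrix.one_mulVec]
      have hyne : y ≠ 0 := by
        intro h
        have := dotProduct_self_pos' hx
        rw [← hyy, h] at this
        simp at this
      have hMq := (hM.2 t).dotProduct_mulVec_pos hyne
      rw [show star y = y from rfl, quadBil] at hMq
      rwa [hbmv]
    have hab : 0 ≤ a ⬝ᵥ b := by
      have := blk_psd L M P hP t x
      rwa [quadBil] at this
    have hba : b ⬝ᵥ a = a ⬝ᵥ b := dotProduct_comm _ _
    simp only [add_dotProduct, dotProduct_add, smul_dotProduct, dotProduct_smul, smul_eq_mul,
      hba]
    rcases eq_or_lt_of_le hu0 with h0 | h0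
    · rw [← h0]
      simpa using hLq
    · have t1 : 0 < u * (u * (b ⬝ᵥ b)) := mul_pos h0 (mul_pos h0 hbb)
      have t2 : 0 ≤ (1 - u) * ((1 - u) * (a ⬝ᵥ a) + u * (a ⬝ᵥ b)) :=
        mul_nonneg (by linarith) (add_nonneg (mul_nonneg (by linarith) hLq.le)
          (mul_nonneg hu0 hab))
      have t3 : 0 ≤ u * ((1 - u) * (a ⬝ᵥ b)) :=
        mul_nonneg hu0 (mul_nonneg (by linarith) hab)
      nlinarith [t1, t2, t3]
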